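/- Let φ, ψ ∈ L¹(ℝ^{2n}) ∩ L²(ℝ^{2n}) and k,l ∈ ℤⁿ. Then for almost every (ξ,ξ') ∈ 𝕋ⁿ×𝕋ⁿ, [T^t_{(k,l)}φ, ψ](ξ,ξ') = e^{2πi(k·ξ + l·ξ')} e^{−πi k·l} [φ,ψ](ξ,ξ'). -/

import Mathlib

open MeasureTheory Complex Filter
open scoped Real ENNReal

noncomputable section

/-- Integer–real dot product. -/
def idot {n : ℕ} (k : Fin n → ℤ) (x : Fin n → ℝ) : ℝ := ∑ i, (k i : ℝ) * x i

/-- Integer–integer dot product. -/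
def iidot {n : ℕ} (k l : Fin n → ℤ) : ℤ := ∑ i, k i * l i

/-- Cast an integer vector to a real vector. -/
def intCast {n : ℕ} (k : Fin n → ℤ) : Fin n → ℝ := fun i => (k i : ℝ)

/-- The twisted translation `T^t_{(k,l)} φ` on `ℝⁿ × ℝⁿ`:
`T^t_{(k,l)}φ(x,y) = e^{πi(x·l − y·k)} φ(x−k, y−l)`. -/
def twistT {n : ℕ} (k l : Fin n → ℤ) (φ : (Fin n → ℝ) × (Fin n → ℝ) → ℂ) :
    (Fin n → ℝ) × (Fin n → ℝ) → ℂ := fun p =>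
  Complex.exp (Real.pi * Complex.I * (idot l p.1 - idot k p.2)) *
    φ (p.1 - intCast k, p.2 - intCast l)

/-- The kernel of the Weyl transform of `φ`:
`K_φ(ξ,η) = ∫_{ℝⁿ} φ(x, η−ξ) e^{πi x·(ξ+η)} dx`. -/
def weylKernel {n : ℕ} (φ : (Fin n → ℝ) × (Fin n → ℝ) → ℂ) :
    (Fin n → ℝ) × (Fin n → ℝ) → ℂ := fun p =>
  ∫ x : Fin n → ℝ, φ (x, p.2 - p.1) *
    Complex.exp (Real.pi * Complex.I * (∑ i, x i * (p.1 i + p.2 i)))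

/-- The Zak transform of a kernel `K ∈ L²(ℝ^{2n})`:
`Z K(ξ,ξ',η) = Σ_{m∈ℤⁿ} K(m+ξ,η) e^{−2πi m·ξ'}`. -/
def zakK {n : ℕ} (K : (Fin n → ℝ) × (Fin n → ℝ) → ℂ)
    (ξ ξ' η : Fin n → ℝ) : ℂ :=
  ∑' m : Fin n → ℤ, K (intCast m + ξ, η) *
    Complex.exp (-(2 * Real.pi) * Complex.I * idot m ξ')

/-- The Weyl–Zak transform of `φ`. -/
def zakW {n : ℕ} (φ : (Fin n → ℝ) × (Fin n → ℝ) → ℂ)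
    (ξ ξ' η : Fin n → ℝ) : ℂ := zakK (weylKernel φ) ξ ξ' η

/-- The bracket map `[φ,ψ](ξ,ξ') = ∫_{ℝⁿ} Z_Wφ(ξ,ξ',η) conj(Z_Wψ(ξ,ξ',η)) dη`. -/
def bracket {n : ℕ} (φ ψ : (Fin n → ℝ) × (Fin n → ℝ) → ℂ)
    (ξ ξ' : Fin n → ℝ) : ℂ :=
  ∫ η : Fin n → ℝ, zakW φ ξ ξ' η * (starRingEnd ℂ) (zakW ψ ξ ξ' η)

/-- The (real-valued) autocorrelation bracket `[φ,φ](ξ,ξ') = ∫_{ℝⁿ} |Z_Wφ(ξ,ξ',η)|² dη`. -/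
def abracket {n : ℕ} (φ : (Fin n → ℝ) × (Fin n → ℝ) → ℂ)
    (ξ ξ' : Fin n → ℝ) : ℝ :=
  ∫ η : Fin n → ℝ, ‖zakW φ ξ ξ' η‖ ^ 2

/-- The fundamental domain `[0,1)ⁿ` of `𝕋ⁿ`. -/
def box (n : ℕ) : Set (Fin n → ℝ) := Set.univ.pi fun _ => Set.Ico (0 : ℝ) 1

/-- The `L²` inner product (conjugate-linear in the second argument). -/
def L2inner {α : Type*} [MeasurableSpace α] (μ : Measure α) (f g : α → ℂ) : ℂ :=
  ∫ x, f x * (starRingEnd ℂ) (g x) ∂μ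

/-- `f` belongs to the closed linear span in `L²(ℝ^{2n})` of the twisted translates
`{T^t_{(k,l)}φ : k,l ∈ ℤⁿ}`, i.e. to `V^t(φ)`. -/
def inVt {n : ℕ} (φ f : (Fin n → ℝ) × (Fin n → ℝ) → ℂ) : Prop :=
  ∀ ε : ℝ, 0 < ε →
    ∃ (s : Finset ((Fin n → ℤ) × (Fin n → ℤ))) (a : (Fin n → ℤ) × (Fin n → ℤ) → ℂ),
      eLpNorm (fun p => f p - ∑ kl ∈ s, a kl * twistT kl.1 kl.2 φ p) 2 volume
        < ENNReal.ofReal ε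


lemma weylKernel_twistT {n : ℕ} (k l : Fin n → ℤ) (φ : (Fin n → ℝ) × (Fin n → ℝ) → ℂ)
    (ξ η : Fin n → ℝ) :
    weylKernel (twistT k l φ) (ξ, η)
      = Complex.exp (Real.pi * Complex.I * (((iidot k l : ℤ) : ℂ) + 2 * (idot k ξ : ℝ))) *
          weylKernel φ (ξ + intCast l, η) := by
  simp only [weylKernel, twistT]
  have h1 : (∫ x : Fin n → ℝ,
        (Complex.exp (Real.pi * Complex.I * (idot l x - idot k ((ξ, η).2 - (ξ, η).1))) *
          φ (x - intCast k, (ξ, η).2 - (ξ, η).1 - intCast l)) *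
          Complex.exp (Real.pi * Complex.I * (∑ i, x i * ((ξ, η).1 i + (ξ, η).2 i))))
      = ∫ x : Fin n → ℝ,
        (Complex.exp (Real.pi * Complex.I *
            (idot l (x + intCast k) - idot k ((ξ, η).2 - (ξ, η).1))) *
          φ (x + intCast k - intCast k, (ξ, η).2 - (ξ, η).1 - intCast l)) *
          Complex.exp (Real.pi * Complex.I *
            (∑ i, (x + intCast k) i * ((ξ, η).1 i + (ξ, η).2 i))) :=
    (MeasureTheory.integral_add_right_eq_self
      (fun x : Fin n → ℝ =>
        (Complex.exp (Real.pi * Complex.I * (idot l x - idot k ((ξ, η).2 - (ξ, η).1))) *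
          φ (x - intCast k, (ξ, η).2 - (ξ, η).1 - intCast l)) *
          Complex.exp (Real.pi * Complex.I * (∑ i, x i * ((ξ, η).1 i + (ξ, η).2 i))))
      (intCast k)).symm
  rw [h1, ← MeasureTheory.integral_const_mul]
  refine integral_congr_ae (Filter.Eventually.of_forall fun x => ?_)
  simp only
  have hx : x + intCast k - intCast k = x := add_sub_cancel_right x (intCast k)
  have hy : η - ξ - intCast l = η - (ξ + intCast l) := sub_sub η ξ (intCast l)
  rw [hx, hy]
  have hre : idot l (x + intCast k) - idot k (η - ξ) +
        (∑ i, (x + intCast k) i * (ξ i + η i))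
      = ((iidot k l : ℤ) : ℝ) + 2 * idot k ξ +
        ∑ i, x i * ((ξ + intCast l) i + η i) := by
    simp only [idot, iidot, intCast, Pi.add_apply, Pi.sub_apply]
    push_cast
    rw [← Finset.sum_sub_distrib, ← Finset.sum_add_distrib, Finset.mul_sum,
      ← Finset.sum_add_distrib, ← Finset.sum_add_distrib]
    exact Finset.sum_congr rfl fun i _ => by ring
  have hexp : Complex.exp (Real.pi * Complex.I * (idot l (x + intCast k) - idot k (η - ξ))) *
        Complex.exp (Real.pi * Complex.I * (∑ i, (x + intCast k) i * (ξ i + η i)))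
      = Complex.exp (Real.pi * Complex.I * (((iidot k l : ℤ) : ℂ) + 2 * (idot k ξ : ℝ))) *
        Complex.exp (Real.pi * Complex.I * (∑ i, x i * ((ξ + intCast l) i + η i))) := by
    rw [← Complex.exp_add, ← Complex.exp_add]
    congr 1
    have hC := congrArg (fun t : ℝ => (t : ℂ)) hre
    push_cast at hC ⊢
    linear_combination (Real.pi : ℂ) * Complex.I * hC
  linear_combination φ (x, η - (ξ + intCast l)) * hexp

lemma zakW_twistT {n : ℕ} (k l : Fin n → ℤ) (φ : (Fin n → ℝ) × (Fin n → ℝ) → ℂ)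
    (ξ ξ' η : Fin n → ℝ) :
    zakW (twistT k l φ) ξ ξ' η
      = Complex.exp (Real.pi * Complex.I * ((iidot k l : ℤ) : ℂ) +
          2 * Real.pi * Complex.I * ((idot k ξ : ℝ) + (idot l ξ' : ℝ))) *
        zakW φ ξ ξ' η := by
  unfold zakW zakK
  rw [← Equiv.tsum_eq (Equiv.addRight l)
    (fun m : Fin n → ℤ => weylKernel φ (intCast m + ξ, η) *
      Complex.exp (-(2 * Real.pi) * Complex.I * idot m ξ')), ← tsum_mul_left]
  refine tsum_congr fun m => ?_
  simp only [Equiv.coe_addRight]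
  rw [weylKernel_twistT]
  have harg : intCast m + ξ + intCast l = intCast (m + l) + ξ := by
    funext i; simp [intCast]; ring
  rw [harg]
  have h1 : idot k (intCast m + ξ) = ((iidot k m : ℤ) : ℝ) + idot k ξ := by
    simp only [idot, iidot, intCast, Pi.add_apply]
    push_cast
    rw [← Finset.sum_add_distrib]
    exact Finset.sum_congr rfl fun i _ => by ring
  have h2 : idot (m + l) ξ' = idot m ξ' + idot l ξ' := by
    simp only [idot, Pi.add_apply]
    push_cast
    rw [← Finset.sum_add_distrib]
    exact Finset.sum_congr rfl fun i _ => by ring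
  have hexp : Complex.exp (Real.pi * Complex.I *
          (((iidot k l : ℤ) : ℂ) + 2 * (idot k (intCast m + ξ) : ℝ))) *
        Complex.exp (-(2 * Real.pi) * Complex.I * idot m ξ')
      = Complex.exp (Real.pi * Complex.I * ((iidot k l : ℤ) : ℂ) +
          2 * Real.pi * Complex.I * ((idot k ξ : ℝ) + (idot l ξ' : ℝ))) *
        Complex.exp (-(2 * Real.pi) * Complex.I * idot (m + l) ξ') := by
    rw [← Complex.exp_add, ← Complex.exp_add,
      show Real.pi * Complex.I *
            (((iidot k l : ℤ) : ℂ) + 2 * (idot k (intCast m + ξ) : ℝ)) +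
          -(2 * Real.pi) * Complex.I * idot m ξ'
        = (Real.pi * Complex.I * ((iidot k l : ℤ) : ℂ) +
            2 * Real.pi * Complex.I * ((idot k ξ : ℝ) + (idot l ξ' : ℝ)) +
            -(2 * Real.pi) * Complex.I * idot (m + l) ξ') +
          ((iidot k m : ℤ) : ℂ) * (2 * Real.pi * Complex.I) from by
        push_cast [h1, h2]; ring,
      Complex.exp_add, Complex.exp_int_mul_two_pi_mul_I, mul_one]
  linear_combination weylKernel φ (intCast (m + l) + ξ, η) * hexp

lemma bracket_twistT_left_eq {n : ℕ} (k l : Fin n → ℤ)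
    (φ ψ : (Fin n → ℝ) × (Fin n → ℝ) → ℂ) (ξ ξ' : Fin n → ℝ) :
    bracket (twistT k l φ) ψ ξ ξ'
      = Complex.exp (Real.pi * Complex.I * ((iidot k l : ℤ) : ℂ) +
          2 * Real.pi * Complex.I * ((idot k ξ : ℝ) + (idot l ξ' : ℝ))) *
        bracket φ ψ ξ ξ' := by
  unfold bracket
  simp only [zakW_twistT, mul_assoc]
  rw [MeasureTheory.integral_const_mul]

/-- `[T^t_{(k,l)}φ, ψ] = e^{2πi(k·ξ+l·ξ')} e^{−πi k·l} [φ,ψ]` a.e. on `𝕋ⁿ×𝕋ⁿ`. -/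
theorem bracket_twistT_left {n : ℕ} (φ ψ : (Fin n → ℝ) × (Fin n → ℝ) → ℂ)
    (hφ1 : Integrable φ volume) (hφ2 : MemLp φ 2 volume)
    (hψ1 : Integrable ψ volume) (hψ2 : MemLp ψ 2 volume) (k l : Fin n → ℤ) :
    ∀ᵐ q : (Fin n → ℝ) × (Fin n → ℝ) ∂(volume.restrict (box n ×ˢ box n)),
      bracket (twistT k l φ) ψ q.1 q.2
        = Complex.exp (2 * Real.pi * Complex.I * (idot k q.1 + idot l q.2)) *
            Complex.exp (-(Real.pi) * Complex.I * ((iidot k l : ℤ) : ℝ)) *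
            bracket φ ψ q.1 q.2 := by
  filter_upwards with q
  rw [bracket_twistT_left_eq,
    show Real.pi * Complex.I * ((iidot k l : ℤ) : ℂ) +
        2 * Real.pi * Complex.I * ((idot k q.1 : ℝ) + (idot l q.2 : ℝ))
      = (2 * Real.pi * Complex.I * ((idot k q.1 : ℝ) + (idot l q.2 : ℝ)) +
          -(Real.pi) * Complex.I * (((iidot k l : ℤ) : ℝ) : ℂ)) +
        ((iidot k l : ℤ) : ℂ) * (2 * Real.pi * Complex.I) from by push_cast; ring,
    Complex.exp_add, Complex.exp_int_mul_two_pi_mul_I, mul_one, Complex.exp_add]
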